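/- Let f(x), g(x) be polynomials in ℤ[x] such that for every integer k with g(k) ≠ 0, g(k) divides f(k) in ℤ. Then f(x) = 0 or deg g ≤ deg f. -/

import Mathlib

open Polynomial Filter

theorem int_degree_le_of_eval_dvd (f g : Polynomial ℤ)
    (h : ∀ k : ℤ, g.eval k ≠ 0 → g.eval k ∣ f.eval k) :
    f = 0 ∨ g.degree ≤ f.degree := by
  by_contra hcon
  push_neg at hcon
  obtain ⟨hf, hlt⟩ := hcon
  set F : Polynomial ℝ := f.map (Int.castRingHom ℝ) with hF
  set G : Polynomial ℝ := g.map (Int.castRingHom ℝ) with hG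
  have hdegF : F.degree = f.degree :=
    degree_map_eq_of_injective (fun a b hab => by simpa using hab) f
  have hdegG : G.degree = g.degree :=
    degree_map_eq_of_injective (fun a b hab => by simpa using hab) g
  have hFne : F ≠ 0 := by
    intro h0
    apply hf
    rwa [← Polynomial.degree_eq_bot, hdegF, Polynomial.degree_eq_bot] at h0
  have hT : Tendsto (fun x => |G.eval x / F.eval x|) atTop atTop := by
    apply Polynomial.abs_div_tendsto_atTop_of_degree_gt (Q := F) (P := G) _ hFne
    rw [hdegF, hdegG]; exact hlt
  have h2 : ∀ᶠ x : ℝ in atTop, (2 : ℝ) ≤ |G.eval x / F.eval x| :=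
    hT.eventually_ge_atTop 2
  have hcast : Tendsto (fun k : ℤ => (k : ℝ)) atTop atTop :=
    tendsto_intCast_atTop_atTop
  have h2' : ∀ᶠ k : ℤ in atTop, (2 : ℝ) ≤ |G.eval (k : ℝ) / F.eval (k : ℝ)| :=
    hcast.eventually h2
  have hfin : {k : ℤ | f.eval k = 0}.Finite := Polynomial.finite_setOf_isRoot hf
  have hle : (atTop : Filter ℤ) ≤ cofinite := by
    rw [Int.cofinite_eq]; exact le_sup_right
  have hfne : ∀ᶠ k : ℤ in atTop, f.eval k ≠ 0 :=
    (hfin.eventually_cofinite_notMem).filter_mono hle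
  obtain ⟨k, hk2, hkf⟩ := (h2'.and hfne).exists
  have hevF : F.eval (k : ℝ) = ((f.eval k : ℤ) : ℝ) := by
    rw [hF]; simp [Polynomial.eval_map, Polynomial.eval₂_at_apply]
  have hevG : G.eval (k : ℝ) = ((g.eval k : ℤ) : ℝ) := by
    rw [hG]; simp [Polynomial.eval_map, Polynomial.eval₂_at_apply]
  have hg : g.eval k ≠ 0 := by
    intro h0
    rw [hevG, h0] at hk2
    norm_num at hk2
  have hdvd : |g.eval k| ∣ |f.eval k| := (abs_dvd _ _).2 ((dvd_abs _ _).2 (h k hg))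
  have hle2 : |g.eval k| ≤ |f.eval k| := Int.le_of_dvd (abs_pos.2 hkf) hdvd
  rw [hevF, hevG, abs_div] at hk2
  have hfpos : (0 : ℝ) < |((f.eval k : ℤ) : ℝ)| := by
    rw [abs_pos]; exact_mod_cast hkf
  have : |((g.eval k : ℤ) : ℝ)| ≤ |((f.eval k : ℤ) : ℝ)| := by
    rw [← Int.cast_abs, ← Int.cast_abs]; exact_mod_cast hle2
  have h1 : |((g.eval k : ℤ) : ℝ)| / |((f.eval k : ℤ) : ℝ)| ≤ 1 := by
    rw [div_le_one hfpos]; exact this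
  linarith
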